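/- Let ε, c_A, c_B be real numbers with 0 < ε, ε ≤ c_A and ε ≤ c_B. Consider the two-player BNPG on the graph consisting of the single edge {A, B}, where player A has cost c_A and externality function g_A with g_A(0) = ε, g_A(1) = c_A, g_A(m) = 2c_A + ε for m ≥ 2, and player B has cost c_B and externality function g_B with g_B(0) = ε, g_B(1) = c_B + 2ε, g_B(m) = 2c_B + ε for m ≥ 2. Then g_A and g_B are nondecreasing and the game has no pure-strategy Nash equilibrium. -/
import Mathlib

/-- Finite difference `Δg(m) = g(m+1) − g(m)`. -/
def Δg (g : ℕ → ℝ) (m : ℕ) : ℝ := g (m + 1) - g m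

/-- Number of investing neighbors of player `i` under profile `x` in graph `G`. -/
noncomputable def nInv {V : Type*} (G : SimpleGraph V) (x : V → Bool) (i : V) : ℕ :=
  {j | G.Adj i j ∧ x j = true}.ncard

/-- Pure-strategy Nash equilibrium of the BNPG on `G` with externalities `g` and costs `c`. -/
def IsPSNE {V : Type*} (G : SimpleGraph V) (g : V → ℕ → ℝ) (c : V → ℝ)
    (x : V → Bool) : Prop :=
  ∀ i, (x i = true → c i ≤ Δg (g i) (nInv G x i)) ∧
       (x i = false → Δg (g i) (nInv G x i) ≤ c i)

lemma nInv0 (x : Fin 2 → Bool) :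
    nInv (⊤ : SimpleGraph (Fin 2)) x 0 = if x 1 = true then 1 else 0 := by
  unfold nInv
  have hset : {j : Fin 2 | (⊤ : SimpleGraph (Fin 2)).Adj 0 j ∧ x j = true}
      = if x 1 = true then {1} else ∅ := by
    ext j
    fin_cases j <;> by_cases h : x 1 = true <;> simp_all [SimpleGraph.top_adj]
  rw [hset]
  by_cases h : x 1 = true <;> simp [h]

lemma nInv1 (x : Fin 2 → Bool) :
    nInv (⊤ : SimpleGraph (Fin 2)) x 1 = if x 0 = true then 1 else 0 := by
  unfold nInv
  have hset : {j : Fin 2 | (⊤ : SimpleGraph (Fin 2)).Adj 1 j ∧ x j = true}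
      = if x 0 = true then {0} else ∅ := by
    ext j
    fin_cases j <;> by_cases h : x 0 = true <;> simp_all [SimpleGraph.top_adj]
  rw [hset]
  by_cases h : x 0 = true <;> simp [h]

theorem stmt14 (ε cA cB : ℝ) (hε : 0 < ε) (hA : ε ≤ cA) (hB : ε ≤ cB)
    (gA gB : ℕ → ℝ)
    (hgA0 : gA 0 = ε) (hgA1 : gA 1 = cA) (hgA2 : ∀ m, 2 ≤ m → gA m = 2 * cA + ε)
    (hgB0 : gB 0 = ε) (hgB1 : gB 1 = cB + 2 * ε) (hgB2 : ∀ m, 2 ≤ m → gB m = 2 * cB + ε) :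
    (Monotone gA ∧ Monotone gB) ∧
    ¬ ∃ x : Fin 2 → Bool,
        IsPSNE (⊤ : SimpleGraph (Fin 2))
          (fun i => if i = 0 then gA else gB)
          (fun i => if i = 0 then cA else cB) x := by
  constructor
  · constructor
    · apply monotone_nat_of_le_succ
      intro n
      match n with
      | 0 => rw [hgA0, hgA1]; linarith
      | 1 => rw [hgA1, hgA2 2 (by norm_num)]; linarith
      | (k+2) => rw [hgA2 (k+2) (by omega), hgA2 (k+3) (by omega)]
    · apply monotone_nat_of_le_succ
      intro n
      match n with
      | 0 => rw [hgB0, hgB1]; linarith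
      | 1 => rw [hgB1, hgB2 2 (by norm_num)]; linarith
      | (k+2) => rw [hgB2 (k+2) (by omega), hgB2 (k+3) (by omega)]
  · rintro ⟨x, hx⟩
    have h0 := hx 0
    have h1 := hx 1
    simp only [nInv0, nInv1, if_true, if_false] at h0 h1
    norm_num at h0 h1
    cases h0' : x 0 <;> cases h1' : x 1 <;> simp [h0', h1', Δg] at h0 h1
    · rw [hgB0, hgB1] at h1; linarith
    · rw [hgA1, hgA2 2 (by norm_num)] at h0; linarith
    · rw [hgA0, hgA1] at h0; linarith
    · rw [hgB1, hgB2 2 (by norm_num)] at h1; linarith
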